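/- Let Δ be a locally finite tree, let Γ ≤ Aut(Δ) be a k-acylindrical subgroup (k ≥ 1), and fix a vertex P of Δ. For every integer m ≥ 0, the map ᾱ defined by ᾱ(σ) = (o(σ), α(Γσ)), where o(σ) is the initial subsegment of length k+1 of σ, is a bijection from the set of directed segments of length m+k+1 with initial vertex P onto the set W̄_m of decorated words of length m+1. -/

import Mathlib

/-- A directed segment of length `n` in the graph `G`: a sequence of `n+1` vertices
with `d(sᵢ, sⱼ) = |i - j|`. -/
def IsSegment {V : Type*} (G : SimpleGraph V) {n : ℕ} (s : Fin (n + 1) → V) : Prop :=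
  ∀ i j : Fin (n + 1), G.dist (s i) (s j) = (((i : ℕ) : ℤ) - ((j : ℕ) : ℤ)).natAbs

/-- The set `𝔖ₙ` of directed segments of length `n` in `G`, as a type. -/
def Seg {V : Type*} (G : SimpleGraph V) (n : ℕ) : Type _ :=
  {s : Fin (n + 1) → V // IsSegment G s}

/-- The orbit relation of a subgroup `Γ ≤ Perm V` acting componentwise on segments. -/
def OrbRel {V : Type*} {G : SimpleGraph V} (Γ : Subgroup (Equiv.Perm V)) {n : ℕ}
    (s t : Seg G n) : Prop :=
  ∃ g ∈ Γ, ∀ i, g (s.1 i) = t.1 i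

/-- The alphabet `A = Γ\𝔖_{k+1}`. -/
def Alphabet {V : Type*} (G : SimpleGraph V) (Γ : Subgroup (Equiv.Perm V)) (k : ℕ) : Type _ :=
  Quot (OrbRel (G := G) Γ (n := k + 1))

/-- The transition relation: `Mrel G Γ b a` means `M(b, a) = 1`. -/
def Mrel {V : Type*} (G : SimpleGraph V) (Γ : Subgroup (Equiv.Perm V)) {k : ℕ}
    (b a : Alphabet G Γ k) : Prop :=
  ∃ σ τ : Seg G (k + 1), Quot.mk _ σ = a ∧ Quot.mk _ τ = b ∧
    ∀ j : Fin (k + 1), τ.1 j.castSucc = σ.1 j.succ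

/-- A function `w : Fin (m+1) → A` is an admissible word (an element of `W_m`). -/
def Admissible {V : Type*} (G : SimpleGraph V) (Γ : Subgroup (Equiv.Perm V)) {k m : ℕ}
    (w : Fin (m + 1) → Alphabet G Γ k) : Prop :=
  ∀ j : Fin m, Mrel G Γ (w j.succ) (w j.castSucc)

/-- The subsegment `(s_j, …, s_{j+k+1})` of a directed segment of length `m+k+1`. -/
def subseg {V : Type*} (G : SimpleGraph V) (m k : ℕ) (σ : Seg G (m + k + 1))
    (j : Fin (m + 1)) : Seg G (k + 1) :=
  ⟨fun i => σ.1 ⟨(i : ℕ) + (j : ℕ), by have := i.isLt; have := j.isLt; omega⟩, by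
    intro i i'
    have h := σ.2 ⟨(i : ℕ) + (j : ℕ), by have := i.isLt; have := j.isLt; omega⟩
      ⟨(i' : ℕ) + (j : ℕ), by have := i'.isLt; have := j.isLt; omega⟩
    simp only [Fin.val_mk] at h ⊢
    rw [h]
    push_cast
    omega⟩

/-- The word `α(Γσ) ∈ W_m` associated with a directed segment of length `m+k+1`. -/
def wordOf {V : Type*} (G : SimpleGraph V) (Γ : Subgroup (Equiv.Perm V)) (m k : ℕ)
    (σ : Seg G (m + k + 1)) : Fin (m + 1) → Alphabet G Γ k :=
  fun j => Quot.mk _ (subseg G m k σ j)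
section TreeAux

variable {V : Type*} {G : SimpleGraph V}

lemma aux_dist_le_of_mem_support {x y z : V} (p : G.Walk x y) (h : z ∈ p.support) :
    G.dist x z ≤ p.length := by
  classical
  exact le_trans (SimpleGraph.dist_le (p.takeUntil z h)) (SimpleGraph.Walk.length_takeUntil_le p h)

lemma aux_path_concat {x u v : V} (p : G.Walk x u) (hp : p.IsPath) (h : G.Adj u v)
    (hv : v ∉ p.support) : (p.concat h).IsPath := by
  classical
  rw [SimpleGraph.Walk.isPath_def, SimpleGraph.Walk.support_concat]
  simp only [List.concat_eq_append, List.nodup_append]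
  exact ⟨hp.support_nodup, List.nodup_singleton v, by
    simp only [List.mem_singleton]; rintro a ha b rfl rfl; exact hv ha⟩

/-- In a tree, the distance to adjacent vertices differs by exactly one. -/
lemma tree_dist_adj (hconn : G.Connected) (hacyc : G.IsAcyclic) {u v : V} (x : V)
    (h : G.Adj u v) :
    G.dist x v = G.dist x u + 1 ∨ G.dist x u = G.dist x v + 1 := by
  classical
  obtain ⟨p, hp, hplen⟩ := hconn.exists_path_of_dist x u
  by_cases hv : v ∈ p.support
  · right
    have h1 : G.dist v u = 1 := SimpleGraph.dist_eq_one_iff_adj.mpr h.symm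
    have htake := SimpleGraph.dist_le (p.takeUntil v hv)
    have hdrop := SimpleGraph.dist_le (p.dropUntil v hv)
    have hsum : (p.takeUntil v hv).length + (p.dropUntil v hv).length = p.length := by
      rw [← SimpleGraph.Walk.length_append, SimpleGraph.Walk.take_spec]
    have htri := hconn.dist_triangle (u := x) (v := v) (w := u)
    omega
  · left
    have hq : (p.concat h).IsPath := aux_path_concat p hp h hv
    obtain ⟨r, hr, hrlen⟩ := hconn.exists_path_of_dist x v
    have := hacyc.path_unique ⟨p.concat h, hq⟩ ⟨r, hr⟩
    have hlen : (p.concat h).length = r.length := by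
      have h2 : (⟨p.concat h, hq⟩ : G.Path x v).1 = (⟨r, hr⟩ : G.Path x v).1 := by rw [this]
      simpa using congrArg SimpleGraph.Walk.length h2
    rw [SimpleGraph.Walk.length_concat] at hlen
    omega

/-- In a tree, a non-backtracking extension increases distance. -/
lemma tree_dist_ext (hconn : G.Connected) (hacyc : G.IsAcyclic) {w u v : V} (x : V)
    (hwu : G.Adj w u) (huv : G.Adj u v) (hne : w ≠ v)
    (hd : G.dist x u = G.dist x w + 1) : G.dist x v = G.dist x u + 1 := by
  classical
  rcases tree_dist_adj hconn hacyc x huv with h | h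
  · exact h
  · exfalso
    obtain ⟨pw, hpw, hpwlen⟩ := hconn.exists_path_of_dist x w
    obtain ⟨pv, hpv, hpvlen⟩ := hconn.exists_path_of_dist x v
    have hwns : u ∉ pw.support := fun hmem => by
      have := aux_dist_le_of_mem_support pw hmem; omega
    have hvns : u ∉ pv.support := fun hmem => by
      have := aux_dist_le_of_mem_support pv hmem; omega
    have hqw : (pw.concat hwu).IsPath := aux_path_concat pw hpw hwu hwns
    have hqv : (pv.concat huv.symm).IsPath := aux_path_concat pv hpv huv.symm hvns
    have heq := hacyc.path_unique ⟨pw.concat hwu, hqw⟩ ⟨pv.concat huv.symm, hqv⟩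
    rw [Subtype.ext_iff] at heq
    obtain ⟨hv, -⟩ := SimpleGraph.Walk.concat_inj heq
    exact hne hv

end TreeAux

section SegAux

variable {V : Type*} {G : SimpleGraph V} {Γ : Subgroup (Equiv.Perm V)}

lemma perm_dist (hconn : G.Connected)
    (hAut : ∀ g ∈ Γ, ∀ u v : V, G.Adj (g u) (g v) ↔ G.Adj u v)
    {g : Equiv.Perm V} (hg : g ∈ Γ) (u v : V) : G.dist (g u) (g v) = G.dist u v := by
  have key : ∀ h : Equiv.Perm V, (∀ a b : V, G.Adj a b → G.Adj (h a) (h b)) →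
      ∀ a b : V, G.dist (h a) (h b) ≤ G.dist a b := by
    intro h hh a b
    obtain ⟨p, hplen⟩ := hconn.exists_walk_length_eq_dist a b
    have := SimpleGraph.dist_le (p.map ⟨(h : V → V), fun hadj => hh _ _ hadj⟩)
    rwa [SimpleGraph.Walk.length_map, hplen] at this
  have h1 := key g (fun a b hab => (hAut g hg a b).mpr hab) u v
  have h2 := key g⁻¹ (fun a b hab => by
      have := (hAut g hg (g⁻¹ a) (g⁻¹ b)).mp
      simp only [Equiv.Perm.inv_def, Equiv.apply_symm_apply] at this
      exact this hab) (g u) (g v)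
  simp only [Equiv.Perm.inv_def, Equiv.symm_apply_apply] at h2
  omega

lemma orb_equiv {n : ℕ} : Equivalence (OrbRel (G := G) Γ (n := n)) := by
  constructor
  · exact fun s => ⟨1, Γ.one_mem, fun i => rfl⟩
  · rintro s t ⟨g, hg, h⟩
    exact ⟨g⁻¹, Γ.inv_mem hg, fun i => by rw [← h i, Equiv.Perm.inv_def, Equiv.symm_apply_apply]⟩
  · rintro s t r ⟨g, hg, h⟩ ⟨g', hg', h'⟩
    exact ⟨g' * g, Γ.mul_mem hg' hg, fun i => by rw [Equiv.Perm.mul_apply, h i, h' i]⟩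

lemma quot_eq_iff {n : ℕ} (s t : Seg G n) :
    Quot.mk (OrbRel (G := G) Γ) s = Quot.mk (OrbRel (G := G) Γ) t ↔
      OrbRel (G := G) Γ s t := by
  rw [Quot.eq]
  exact orb_equiv.eqvGen_iff

/-- Applying `g ∈ Γ` to a segment gives a segment. -/
def segSmul (hconn : G.Connected)
    (hAut : ∀ g ∈ Γ, ∀ u v : V, G.Adj (g u) (g v) ↔ G.Adj u v)
    {g : Equiv.Perm V} (hg : g ∈ Γ) {n : ℕ} (s : Seg G n) : Seg G n :=
  ⟨fun i => g (s.1 i), fun i j => by rw [perm_dist hconn hAut hg, s.2]⟩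

/-- Segment property for `ℕ`-indexed prefixes. -/
def IsSegN (G : SimpleGraph V) (S : ℕ → V) (N : ℕ) : Prop :=
  ∀ i j : ℕ, i ≤ N → j ≤ N → G.dist (S i) (S j) = ((i : ℤ) - (j : ℤ)).natAbs

lemma extN (hconn : G.Connected) (hacyc : G.IsAcyclic) {S : ℕ → V} {N : ℕ}
    (hseg : IsSegN G S N) (hN : 1 ≤ N) (hadj : G.Adj (S N) (S (N + 1)))
    (hne : S (N + 1) ≠ S (N - 1)) : IsSegN G S (N + 1) := by
  have claim : ∀ i, i ≤ N → G.dist (S i) (S (N + 1)) = N + 1 - i := by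
    intro i hi
    rcases eq_or_lt_of_le hi with rfl | hlt
    · rw [SimpleGraph.dist_eq_one_iff_adj.mpr hadj]; omega
    · have hwu : G.Adj (S (N - 1)) (S N) := SimpleGraph.dist_eq_one_iff_adj.mp
        (by rw [hseg (N - 1) N (by omega) le_rfl]; omega)
      have hd' : G.dist (S i) (S N) = G.dist (S i) (S (N - 1)) + 1 := by
        rw [hseg i N (by omega) le_rfl, hseg i (N - 1) (by omega) (by omega)]; omega
      have hfin := tree_dist_ext hconn hacyc (S i) hwu hadj (fun hh => hne hh.symm) hd'
      rw [hseg i N (by omega) le_rfl] at hfin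
      omega
  intro i j hi hj
  by_cases hi' : i ≤ N <;> by_cases hj' : j ≤ N
  · exact hseg i j hi' hj'
  · have : j = N + 1 := by omega
    subst this
    rw [claim i hi']; omega
  · have : i = N + 1 := by omega
    subst this
    rw [SimpleGraph.dist_comm, claim j hj']; omega
  · have : i = j := by omega
    subst this
    rw [SimpleGraph.dist_self]; omega

end SegAux
/-- Lemma 2 of the paper. Let `Δ` be a locally finite tree,
`Γ ≤ Aut(Δ)` a `k`-acylindrical subgroup (`k ≥ 1`), and fix a vertex `P`. For every `m ≥ 0`,
the map `ᾱ(σ) = (o(σ), α(Γσ))`, where `o(σ)` is the initial subsegment of length `k+1`,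
is a bijection from the directed segments of length `m+k+1` starting at `P` onto the set
`W̄_m = {(d, w) ∈ D × W_m : o(w) = δ(d)}` of decorated words of length `m+1`:
it takes values in `W̄_m`, is injective, and is surjective. -/
theorem alphabar_bijection {V : Type*} (G : SimpleGraph V)
    (hconn : G.Connected) (hacyc : G.IsAcyclic) (hlf : G.LocallyFinite)
    (Γ : Subgroup (Equiv.Perm V))
    (hAut : ∀ g ∈ Γ, ∀ u v : V, G.Adj (g u) (g v) ↔ G.Adj u v)
    (k : ℕ) (hk : 1 ≤ k)
    (hacylk : ∀ g ∈ Γ, ∀ s : Fin (k + 1) → V, IsSegment G s → (∀ i, g (s i) = s i) → g = 1)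
    (P : V) (m : ℕ) :
    (∀ σ : Seg G (m + k + 1), σ.1 0 = P →
      (subseg G m k σ 0).1 0 = P ∧ Admissible G Γ (wordOf G Γ m k σ) ∧
        wordOf G Γ m k σ 0 = Quot.mk _ (subseg G m k σ 0)) ∧
    (∀ σ τ : Seg G (m + k + 1), σ.1 0 = P → τ.1 0 = P →
      subseg G m k σ 0 = subseg G m k τ 0 → wordOf G Γ m k σ = wordOf G Γ m k τ → σ = τ) ∧
    (∀ d : Seg G (k + 1), d.1 0 = P → ∀ w : Fin (m + 1) → Alphabet G Γ k,
      Admissible G Γ w → w 0 = Quot.mk _ d →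
      ∃ σ : Seg G (m + k + 1), σ.1 0 = P ∧ subseg G m k σ 0 = d ∧ wordOf G Γ m k σ = w) := by
  classical
  refine ⟨?_, ?_, ?_⟩
  · -- Part 1: well-definedness
    intro σ hσ
    refine ⟨?_, ?_, rfl⟩
    · have : (subseg G m k σ 0).1 0 = σ.1 0 := by
        show σ.1 _ = σ.1 0
        congr 1
      rw [this, hσ]
    · intro j
      refine ⟨subseg G m k σ j.castSucc, subseg G m k σ j.succ, rfl, rfl, ?_⟩
      intro i
      show σ.1 _ = σ.1 _
      refine congrArg σ.1 (Fin.ext ?_)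
      (try simp only [Fin.val_mk, Fin.val_zero, Fin.val_succ, Fin.coe_castSucc]) <;> omega
  · -- Part 2: injectivity
    intro σ τ hσP hτP hsub hw
    have key : ∀ j : ℕ, j ≤ m → ∀ n : ℕ, n ≤ j + k + 1 → ∀ h : n < m + k + 2,
        σ.1 ⟨n, h⟩ = τ.1 ⟨n, h⟩ := by
      intro j
      induction j with
      | zero =>
        intro _ n hn h
        calc σ.1 ⟨n, h⟩ = (subseg G m k σ 0).1 ⟨n, by omega⟩ := by
              show _ = σ.1 _
              refine congrArg σ.1 (Fin.ext ?_)
              (try simp only [Fin.val_mk, Fin.val_zero, Fin.val_succ, Fin.coe_castSucc]) <;> omega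
          _ = (subseg G m k τ 0).1 ⟨n, by omega⟩ := by rw [hsub]
          _ = τ.1 ⟨n, h⟩ := by
              show τ.1 _ = _
              refine congrArg τ.1 (Fin.ext ?_)
              (try simp only [Fin.val_mk, Fin.val_zero, Fin.val_succ, Fin.coe_castSucc]) <;> omega
      | succ j ih =>
        intro hj n hn h
        by_cases hsmall : n ≤ j + k + 1
        · exact ih (by omega) n hsmall h
        · have hn2 : n = j + k + 2 := by omega
          have hq := congrFun hw ⟨j + 1, by omega⟩
          simp only [wordOf] at hq
          replace hq := (quot_eq_iff (Γ := Γ) _ _).mp hq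
          obtain ⟨g, hg, hgs⟩ := hq
          have hs' : IsSegment G (fun i : Fin (k + 1) => σ.1 ⟨(i : ℕ) + (j + 1), by omega⟩) := by
            intro i i'
            have h2 := σ.2 ⟨(i : ℕ) + (j + 1), by omega⟩ ⟨(i' : ℕ) + (j + 1), by omega⟩
            simp only [Fin.val_mk] at h2
            show G.dist (σ.1 _) (σ.1 _) = _
            rw [h2]; omega
          have hfix : ∀ i : Fin (k + 1), g (σ.1 ⟨(i : ℕ) + (j + 1), by omega⟩) =
              σ.1 ⟨(i : ℕ) + (j + 1), by omega⟩ := by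
            intro i
            have h3 := hgs i.castSucc
            have h4 : (subseg G m k τ ⟨j + 1, by omega⟩).1 i.castSucc =
                τ.1 ⟨(i : ℕ) + (j + 1), by omega⟩ := by
              show τ.1 _ = τ.1 _
              refine congrArg τ.1 (Fin.ext ?_)
              (try simp only [Fin.val_mk, Fin.val_zero, Fin.val_succ, Fin.coe_castSucc]) <;> omega
            have h5 : (subseg G m k σ ⟨j + 1, by omega⟩).1 i.castSucc =
                σ.1 ⟨(i : ℕ) + (j + 1), by omega⟩ := by
              show σ.1 _ = σ.1 _
              refine congrArg σ.1 (Fin.ext ?_)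
              (try simp only [Fin.val_mk, Fin.val_zero, Fin.val_succ, Fin.coe_castSucc]) <;> omega
            rw [h4, h5] at h3
            rw [h3, ← ih (by omega) ((i : ℕ) + (j + 1)) (by omega) (by omega)]
          have hg1 : g = 1 := hacylk g hg _ hs' hfix
          have h6 := hgs ⟨k + 1, by omega⟩
          rw [hg1] at h6
          simp only [Equiv.Perm.coe_one, id_eq] at h6
          calc σ.1 ⟨n, h⟩ = (subseg G m k σ ⟨j + 1, by omega⟩).1 ⟨k + 1, by omega⟩ := by
                show _ = σ.1 _
                refine congrArg σ.1 (Fin.ext ?_)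
                (try simp only [Fin.val_mk]) <;> omega
            _ = (subseg G m k τ ⟨j + 1, by omega⟩).1 ⟨k + 1, by omega⟩ := h6
            _ = τ.1 ⟨n, h⟩ := by
                show τ.1 _ = _
                refine congrArg τ.1 (Fin.ext ?_)
                (try simp only [Fin.val_mk]) <;> omega
    apply Subtype.ext
    funext i
    have := key m le_rfl i (by omega) (by omega)
    simpa using this
  · -- Part 3: surjectivity
    intro d hd w hadm hw0
    have seqs_ex : ∀ j : ℕ, j ≤ m → ∃ f : ℕ → Seg G (k + 1),
        f 0 = d ∧
        (∀ l, l ≤ j → ∀ hl : l < m + 1, Quot.mk (OrbRel Γ) (f l) = w ⟨l, hl⟩) ∧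
        (∀ l, l < j → ∀ i : Fin (k + 1), (f (l + 1)).1 i.castSucc = (f l).1 i.succ) := by
      intro j
      induction j with
      | zero =>
        intro _
        refine ⟨fun _ => d, rfl, ?_, fun l hl => absurd hl (by omega)⟩
        intro l hl hl2
        have : l = 0 := by omega
        subst this
        rw [← hw0]
        refine congrArg w (Fin.ext ?_)
        (try simp only [Fin.val_mk, Fin.val_zero]) <;> omega
      | succ j ih =>
        intro hj
        obtain ⟨f, hf0, hfq, hfo⟩ := ih (by omega)
        obtain ⟨σ', τ', hσq, hτq, hov⟩ := hadm ⟨j, by omega⟩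
        have hqe : Quot.mk (OrbRel Γ) σ' = Quot.mk (OrbRel Γ) (f j) := by
          rw [hσq, hfq j (by omega) (by omega)]
          refine congrArg w (Fin.ext ?_)
          (try simp only [Fin.val_mk, Fin.coe_castSucc]) <;> omega
        rw [quot_eq_iff] at hqe
        obtain ⟨g, hg, hgs⟩ := hqe
        refine ⟨Function.update f (j + 1) (segSmul hconn hAut hg τ'), ?_, ?_, ?_⟩
        · rw [Function.update_of_ne (by omega), hf0]
        · intro l hl hl2
          rcases Nat.lt_or_ge l (j + 1) with hlt | hge
          · rw [Function.update_of_ne (by omega), hfq l (by omega) hl2]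
          · have : l = j + 1 := by omega
            subst this
            rw [Function.update_self]
            have : Quot.mk (OrbRel Γ) (segSmul hconn hAut hg τ') = Quot.mk (OrbRel Γ) τ' := by
              rw [quot_eq_iff]
              exact ⟨g⁻¹, Γ.inv_mem hg, fun i => by
                show g⁻¹ (g (τ'.1 i)) = τ'.1 i
                simp⟩
            rw [this, hτq]
            refine congrArg w (Fin.ext ?_)
            (try simp only [Fin.val_mk, Fin.val_succ]) <;> omega
        · intro l hl i
          rcases Nat.lt_or_ge l j with hlt | hge
          · rw [Function.update_of_ne (by omega), Function.update_of_ne (by omega)]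
            exact hfo l (by omega) i
          · have : l = j := by omega
            subst this
            rw [Function.update_self, Function.update_of_ne (by omega)]
            show g (τ'.1 i.castSucc) = _
            rw [hov i]
            exact hgs i.succ
    obtain ⟨f, hf0, hfq, hfo⟩ := seqs_ex m le_rfl
    obtain ⟨S, hS⟩ : ∃ S : ℕ → V, ∀ n,
        S n = (f (n - (k + 1))).1 ⟨min n (k + 1), by omega⟩ := ⟨_, fun n => rfl⟩
    have feq : ∀ a b : ℕ, a = b → ∀ ia ib : Fin (k + 2), (ia : ℕ) = (ib : ℕ) →
        (f a).1 ia = (f b).1 ib := by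
      rintro a b rfl ia ib hab
      exact congrArg (f a).1 (Fin.ext hab)
    have CONS : ∀ l, l ≤ m → ∀ i : Fin (k + 2), (f l).1 i = S (l + (i : ℕ)) := by
      intro l
      induction l with
      | zero =>
        intro _ i
        rw [hS]
        refine feq _ _ (by have := i.isLt; omega) _ _ ?_
        have := i.isLt
        (try simp only [Fin.val_mk]) <;> omega
      | succ l ihl =>
        intro hl i
        by_cases hik : (i : ℕ) ≤ k
        · have h1 := hfo l (by omega) ⟨(i : ℕ), by omega⟩
          have h2 : (f (l + 1)).1 i = (f (l + 1)).1 (Fin.castSucc ⟨(i : ℕ), by omega⟩) :=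
            feq _ _ rfl _ _ (by (try simp only [Fin.coe_castSucc, Fin.val_mk]) <;> omega)
          rw [h2, h1]
          have h3 := ihl (by omega) (Fin.succ ⟨(i : ℕ), by omega⟩)
          rw [h3]
          refine congrArg S ?_
          (try simp only [Fin.val_succ, Fin.val_mk]) <;> omega
        · have hik' : (i : ℕ) = k + 1 := by have := i.isLt; omega
          rw [hS]
          refine feq _ _ (by omega) _ _ ?_
          (try simp only [Fin.val_mk]) <;> omega
    have ISEG : ∀ N, N ≤ m + k + 1 → IsSegN G S N := by
      intro N
      induction N with
      | zero =>
        intro _ i j hi hj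
        have hi0 : i = 0 := by omega
        have hj0 : j = 0 := by omega
        subst hi0; subst hj0
        rw [SimpleGraph.dist_self]; omega
      | succ N ihN =>
        intro hN
        by_cases hsm : N + 1 ≤ k + 1
        · intro i j hi hj
          have e1 := CONS 0 (by omega) ⟨i, by omega⟩
          have e2 := CONS 0 (by omega) ⟨j, by omega⟩
          have hdist := (f 0).2 ⟨i, by omega⟩ ⟨j, by omega⟩
          rw [e1, e2] at hdist
          simp only [Fin.val_mk, Nat.zero_add] at hdist
          rw [hdist]
        · have hN1 : k + 1 ≤ N := by omega
          have hl : N - k ≤ m := by omega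
          have e1 := CONS (N - k) hl ⟨k, by omega⟩
          have e2 := CONS (N - k) hl ⟨k + 1, by omega⟩
          have e0 := CONS (N - k) hl ⟨k - 1, by omega⟩
          have hadj : G.Adj (S N) (S (N + 1)) := by
            have hdist := (f (N - k)).2 ⟨k, by omega⟩ ⟨k + 1, by omega⟩
            rw [e1, e2] at hdist
            have hN' : N - k + k = N := by omega
            have hN'' : N - k + (k + 1) = N + 1 := by omega
            rw [hN', hN''] at hdist
            exact SimpleGraph.dist_eq_one_iff_adj.mp (by rw [hdist]; simp only [Fin.val_mk]; omega)
          have hne : S (N + 1) ≠ S (N - 1) := by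
            have hdist := (f (N - k)).2 ⟨k + 1, by omega⟩ ⟨k - 1, by omega⟩
            rw [e2, e0] at hdist
            have hN'' : N - k + (k + 1) = N + 1 := by omega
            have hN''' : N - k + (k - 1) = N - 1 := by omega
            rw [hN'', hN'''] at hdist
            intro heq
            rw [heq, SimpleGraph.dist_self] at hdist
            simp only [Fin.val_mk] at hdist
            omega
          exact extN hconn hacyc (ihN (by omega)) (by omega) hadj hne
    refine ⟨⟨fun i => S (i : ℕ), fun i j => ISEG (m + k + 1) le_rfl i j (by omega) (by omega)⟩,
      ?_, ?_, ?_⟩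
    · show S ((0 : Fin (m + k + 2)) : ℕ) = P
      have := CONS 0 (by omega) 0
      rw [hf0] at this
      simp only [Fin.val_zero, Nat.zero_add] at this ⊢
      rw [← this]
      exact hd
    · apply Subtype.ext
      funext i
      show S _ = d.1 i
      have := CONS 0 (by omega) i
      rw [hf0] at this
      rw [this]
      refine congrArg S ?_
      all_goals ((try simp only [Fin.val_mk, Fin.val_zero]) <;> omega)
    · funext j
      show Quot.mk _ (subseg G m k _ j) = w j
      have hsub : subseg G m k ⟨fun i => S (i : ℕ),
          fun i j => ISEG (m + k + 1) le_rfl i j (by omega) (by omega)⟩ j = f (j : ℕ) := by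
        apply Subtype.ext
        funext i
        show S ((i : ℕ) + (j : ℕ)) = (f (j : ℕ)).1 i
        rw [CONS (j : ℕ) (by omega) i]
        refine congrArg S ?_
        omega
      rw [hsub, hfq (j : ℕ) (by omega) (by omega)]
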